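/- arXiv:1907.08865 — 2 statements merged into one kernel-verified Lean document; each statement's English description precedes it below -/
import Mathlib

section
/- Let $(G,\sigma)$ be a properly colored graph with a hub-vertex $x$, and let $F$ be a set of unordered vertex pairs of minimum cardinality such that $(G \triangle F, \sigma)$ is an hc-cograph. Then $F$ contains no pair incident to $x$. -/
namespace RBMGPaper

variable {V : Type*} {C : Type*}

/-- `HCOn G σ A` asserts that the subgraph of the vertex-colored graph `(G, σ)` induced on the
vertex set `A` is a hierarchically colored cograph, built recursively via (K1)–(K3). -/
inductive HCOn (G : SimpleGraph V) (σ : V → C) : Set V → Prop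
  | single (v : V) : HCOn G σ {v}
  | join (A B : Set V) (hA : A.Nonempty) (hB : B.Nonempty) (hdisj : Disjoint A B)
      (hadj : ∀ a ∈ A, ∀ b ∈ B, G.Adj a b)
      (hcol : Disjoint (σ '' A) (σ '' B))
      (h1 : HCOn G σ A) (h2 : HCOn G σ B) : HCOn G σ (A ∪ B)
  | union (A B : Set V) (hA : A.Nonempty) (hB : B.Nonempty) (hdisj : Disjoint A B)
      (hadj : ∀ a ∈ A, ∀ b ∈ B, ¬ G.Adj a b)
      (hcol : σ '' A ⊆ σ '' B ∨ σ '' B ⊆ σ '' A)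
      (h1 : HCOn G σ A) (h2 : HCOn G σ B) : HCOn G σ (A ∪ B)

/-- `(G, σ)` is a hierarchically colored cograph (hc-cograph). -/
def IsHCCograph (G : SimpleGraph V) (σ : V → C) : Prop :=
  HCOn G σ Set.univ

/-- `CographOn G A` asserts that the subgraph of `G` induced on `A` is a cograph. -/
inductive CographOn (G : SimpleGraph V) : Set V → Prop
  | single (v : V) : CographOn G {v}
  | union (A B : Set V) (hA : A.Nonempty) (hB : B.Nonempty) (hdisj : Disjoint A B)
      (hadj : ∀ a ∈ A, ∀ b ∈ B, ¬ G.Adj a b)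
      (h1 : CographOn G A) (h2 : CographOn G B) : CographOn G (A ∪ B)
  | join (A B : Set V) (hA : A.Nonempty) (hB : B.Nonempty) (hdisj : Disjoint A B)
      (hadj : ∀ a ∈ A, ∀ b ∈ B, G.Adj a b)
      (h1 : CographOn G A) (h2 : CographOn G B) : CographOn G (A ∪ B)

/-- `G` is a cograph. -/
def IsCograph (G : SimpleGraph V) : Prop := CographOn G Set.univ

/-- The set `s` induces a biclique (complete bipartite graph, possibly `K₁`) in `G`. -/
def IsBiclique (G : SimpleGraph V) (s : Set V) : Prop :=
  ∃ A B : Set V, s = A ∪ B ∧ Disjoint A B ∧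
    ∀ u ∈ s, ∀ v ∈ s, (G.Adj u v ↔ ((u ∈ A ∧ v ∈ B) ∨ (u ∈ B ∧ v ∈ A)))

/-- `G` is a bicluster graph: every connected component is a biclique. -/
def IsBiclusterGraph (G : SimpleGraph V) : Prop :=
  ∀ c : G.ConnectedComponent, IsBiclique G c.supp

/-- `addHub G` is the graph `G + x`: a new vertex (`none`) adjacent to all vertices of `G`. -/
def addHub (G : SimpleGraph V) : SimpleGraph (Option V) where
  Adj u v :=
    (∃ a b, u = some a ∧ v = some b ∧ G.Adj a b) ∨
    (u = none ∧ ∃ b, v = some b) ∨ ((∃ a, u = some a) ∧ v = none)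
  symm := by
    refine ⟨?_⟩
    rintro u v (⟨a, b, rfl, rfl, h⟩ | ⟨rfl, b, rfl⟩ | ⟨⟨a, rfl⟩, rfl⟩)
    · exact Or.inl ⟨b, a, rfl, rfl, h.symm⟩
    · exact Or.inr (Or.inr ⟨⟨b, rfl⟩, rfl⟩)
    · exact Or.inr (Or.inl ⟨rfl, a, rfl⟩)
  loopless := by
    refine ⟨?_⟩
    rintro u (⟨a, b, rfl, hb, h⟩ | ⟨rfl, b, hb⟩ | ⟨⟨a, rfl⟩, hb⟩)
    · exact G.irrefl (Option.some_injective V hb ▸ h)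
    · exact nomatch hb
    · exact nomatch hb


/-- `HCOn` only depends on the adjacency relation within the set. -/
theorem HCOn_congr {G G' : SimpleGraph V} {σ : V → C} {A : Set V}
    (h : HCOn G σ A) (hgg : ∀ u ∈ A, ∀ v ∈ A, (G.Adj u v ↔ G'.Adj u v)) :
    HCOn G' σ A := by
  induction h with
  | single v => exact HCOn.single v
  | join A B hA hB hdisj hadj hcol h1 h2 ih1 ih2 =>
    exact HCOn.join A B hA hB hdisj
      (fun a ha b hb => (hgg a (Set.mem_union_left _ ha) b (Set.mem_union_right _ hb)).mp
        (hadj a ha b hb)) hcol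
      (ih1 fun u hu v hv => hgg u (Set.mem_union_left _ hu) v (Set.mem_union_left _ hv))
      (ih2 fun u hu v hv => hgg u (Set.mem_union_right _ hu) v (Set.mem_union_right _ hv))
  | union A B hA hB hdisj hadj hcol h1 h2 ih1 ih2 =>
    exact HCOn.union A B hA hB hdisj
      (fun a ha b hb hadj' => hadj a ha b hb
        ((hgg a (Set.mem_union_left _ ha) b (Set.mem_union_right _ hb)).mpr hadj')) hcol
      (ih1 fun u hu v hv => hgg u (Set.mem_union_left _ hu) v (Set.mem_union_left _ hv))
      (ih2 fun u hu v hv => hgg u (Set.mem_union_right _ hu) v (Set.mem_union_right _ hv))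

/-- Deleting a vertex whose color is unique within the set preserves the hc-cograph property. -/
theorem HCOn_delete {G : SimpleGraph V} {σ : V → C} {x : V} {A : Set V}
    (h : HCOn G σ A) (hx : ∀ v ∈ A, v ≠ x → σ v ≠ σ x) :
    (A \ {x}).Nonempty → HCOn G σ (A \ {x}) := by
  induction h with
  | single v =>
    rintro ⟨w, hw1, hw2⟩
    have hvx : v ≠ x := by
      simp only [Set.mem_singleton_iff] at hw1 hw2
      subst hw1; exact hw2
    have : ({v} : Set V) \ {x} = {v} := by
      ext z; simp only [Set.mem_diff, Set.mem_singleton_iff]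
      constructor
      · rintro ⟨hz, _⟩; exact hz
      · rintro rfl; exact ⟨rfl, hvx⟩
    rw [this]; exact HCOn.single v
  | join A B hA hB hdisj hadj hcol h1 h2 ih1 ih2 =>
    intro hne
    have hxA : ∀ v ∈ A, v ≠ x → σ v ≠ σ x := fun v hv => hx v (Set.mem_union_left _ hv)
    have hxB : ∀ v ∈ B, v ≠ x → σ v ≠ σ x := fun v hv => hx v (Set.mem_union_right _ hv)
    by_cases hxa : x ∈ A
    · have hBx : B \ {x} = B := by
        ext z; simp only [Set.mem_diff, Set.mem_singleton_iff]
        exact ⟨fun h => h.1, fun h => ⟨h, fun hz => (hdisj.ne_of_mem hxa (hz ▸ h)) rfl⟩⟩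
      by_cases hAne : (A \ {x}).Nonempty
      · have : (A ∪ B) \ {x} = (A \ {x}) ∪ B := by
          rw [Set.union_diff_distrib, hBx]
        rw [this]
        exact HCOn.join _ _ hAne hB (hdisj.mono_left Set.diff_subset)
          (fun a ha b hb => hadj a ha.1 b hb)
          (hcol.mono_left (Set.image_mono Set.diff_subset)) (ih1 hxA hAne) h2
      · have hAx : A ⊆ {x} := by
          intro a ha
          by_contra hax
          exact hAne ⟨a, ha, hax⟩
        have : (A ∪ B) \ {x} = B := by
          rw [Set.union_diff_distrib, hBx]
          have : A \ {x} = ∅ := Set.diff_eq_empty.mpr hAx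
          rw [this, Set.empty_union]
        rw [this]; exact h2
    · by_cases hxb : x ∈ B
      · have hAx : A \ {x} = A := by
          ext z; simp only [Set.mem_diff, Set.mem_singleton_iff]
          exact ⟨fun h => h.1, fun h => ⟨h, fun hz => hxa (hz ▸ h)⟩⟩
        by_cases hBne : (B \ {x}).Nonempty
        · have : (A ∪ B) \ {x} = A ∪ (B \ {x}) := by
            rw [Set.union_diff_distrib, hAx]
          rw [this]
          exact HCOn.join _ _ hA hBne (hdisj.mono_right Set.diff_subset)
            (fun a ha b hb => hadj a ha b hb.1)
            (hcol.mono_right (Set.image_mono Set.diff_subset)) h1 (ih2 hxB hBne)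
        · have hBx : B ⊆ {x} := by
            intro b hb; by_contra hbx; exact hBne ⟨b, hb, hbx⟩
          have : (A ∪ B) \ {x} = A := by
            rw [Set.union_diff_distrib, hAx, Set.diff_eq_empty.mpr hBx, Set.union_empty]
          rw [this]; exact h1
      · have : (A ∪ B) \ {x} = A ∪ B := by
          ext z; simp only [Set.mem_diff, Set.mem_singleton_iff]
          refine ⟨fun h => h.1, fun h => ⟨h, ?_⟩⟩
          rintro rfl
          rcases h with h | h
          · exact hxa h
          · exact hxb h
        rw [this]; exact HCOn.join A B hA hB hdisj hadj hcol h1 h2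
  | union A B hA hB hdisj hadj hcol h1 h2 ih1 ih2 =>
    intro hne
    have hxA : ∀ v ∈ A, v ≠ x → σ v ≠ σ x := fun v hv => hx v (Set.mem_union_left _ hv)
    have hxB : ∀ v ∈ B, v ≠ x → σ v ≠ σ x := fun v hv => hx v (Set.mem_union_right _ hv)
    by_cases hxa : x ∈ A
    · have hBx : B \ {x} = B := by
        ext z; simp only [Set.mem_diff, Set.mem_singleton_iff]
        exact ⟨fun h => h.1, fun h => ⟨h, fun hz => (hdisj.ne_of_mem hxa (hz ▸ h)) rfl⟩⟩
      by_cases hAne : (A \ {x}).Nonempty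
      · have : (A ∪ B) \ {x} = (A \ {x}) ∪ B := by
          rw [Set.union_diff_distrib, hBx]
        rw [this]
        have hcol' : σ '' (A \ {x}) ⊆ σ '' B ∨ σ '' B ⊆ σ '' (A \ {x}) := by
          rcases hcol with hc | hc
          · exact Or.inl ((Set.image_mono Set.diff_subset).trans hc)
          · right
            rintro c ⟨b, hb, rfl⟩
            obtain ⟨a, ha, hab⟩ := hc ⟨b, hb, rfl⟩
            have hbx : b ≠ x := fun hbx => (hdisj.ne_of_mem hxa (hbx ▸ hb)) rfl
            have hax : a ≠ x := fun hax => hxB b hb hbx (hab ▸ hax ▸ rfl)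
            exact ⟨a, ⟨ha, hax⟩, hab⟩
        exact HCOn.union _ _ hAne hB (hdisj.mono_left Set.diff_subset)
          (fun a ha b hb => hadj a ha.1 b hb) hcol' (ih1 hxA hAne) h2
      · have hAx : A ⊆ {x} := by
          intro a ha; by_contra hax; exact hAne ⟨a, ha, hax⟩
        have : (A ∪ B) \ {x} = B := by
          rw [Set.union_diff_distrib, hBx, Set.diff_eq_empty.mpr hAx, Set.empty_union]
        rw [this]; exact h2
    · by_cases hxb : x ∈ B
      · have hAx : A \ {x} = A := by
          ext z; simp only [Set.mem_diff, Set.mem_singleton_iff]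
          exact ⟨fun h => h.1, fun h => ⟨h, fun hz => hxa (hz ▸ h)⟩⟩
        by_cases hBne : (B \ {x}).Nonempty
        · have : (A ∪ B) \ {x} = A ∪ (B \ {x}) := by
            rw [Set.union_diff_distrib, hAx]
          rw [this]
          have hcol' : σ '' A ⊆ σ '' (B \ {x}) ∨ σ '' (B \ {x}) ⊆ σ '' A := by
            rcases hcol with hc | hc
            · left
              rintro c ⟨a, ha, rfl⟩
              obtain ⟨b, hb, hba⟩ := hc ⟨a, ha, rfl⟩
              have hax : a ≠ x := hdisj.ne_of_mem ha hxb
              have hbx : b ≠ x := by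
                rintro rfl
                exact hxA a ha hax hba.symm
              exact ⟨b, ⟨hb, hbx⟩, hba⟩
            · exact Or.inr ((Set.image_mono Set.diff_subset).trans hc)
          exact HCOn.union _ _ hA hBne (hdisj.mono_right Set.diff_subset)
            (fun a ha b hb => hadj a ha b hb.1) hcol' h1 (ih2 hxB hBne)
        · have hBx : B ⊆ {x} := by
            intro b hb; by_contra hbx; exact hBne ⟨b, hb, hbx⟩
          have : (A ∪ B) \ {x} = A := by
            rw [Set.union_diff_distrib, hAx, Set.diff_eq_empty.mpr hBx, Set.union_empty]
          rw [this]; exact h1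
      · have : (A ∪ B) \ {x} = A ∪ B := by
          ext z; simp only [Set.mem_diff, Set.mem_singleton_iff]
          refine ⟨fun h => h.1, fun h => ⟨h, ?_⟩⟩
          rintro rfl
          rcases h with h | h
          · exact hxa h
          · exact hxb h
        rw [this]; exact HCOn.union A B hA hB hdisj hadj hcol h1 h2

/-- Let `(G, σ)` be a properly colored graph with a hub-vertex `x`, and let `F`
be a minimum-cardinality set of unordered vertex pairs such that `(G ∆ F, σ)` is an hc-cograph.
Then `F` contains no pair incident to `x`. -/
theorem optimal_hc_edit_avoids_hub [Fintype V] (G : SimpleGraph V) (σ : V → C) (x : V)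
    (hprop : ∀ u v : V, G.Adj u v → σ u ≠ σ v)
    (hhub : ∀ v : V, v ≠ x → G.Adj x v)
    (F : Set (Sym2 V)) (hFd : ∀ e ∈ F, ¬ e.IsDiag)
    (hF : IsHCCograph (SimpleGraph.fromEdgeSet (symmDiff G.edgeSet F)) σ)
    (hmin : ∀ F' : Set (Sym2 V), (∀ e ∈ F', ¬ e.IsDiag) →
      IsHCCograph (SimpleGraph.fromEdgeSet (symmDiff G.edgeSet F')) σ →
      F.ncard ≤ F'.ncard) :
    ∀ e ∈ F, x ∉ e := by
  classical
  intro e he hxe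
  set F₀ : Set (Sym2 V) := {f ∈ F | x ∉ f} with hF₀def
  -- F₀ is strictly smaller than F
  have hss : F₀ ⊂ F := by
    constructor
    · intro f hf; exact hf.1
    · intro hsub
      exact (hsub he).2 hxe
  have hlt : F₀.ncard < F.ncard := Set.ncard_lt_ncard hss (Set.toFinite F)
  -- the color of x is unique
  have hxcol : ∀ v : V, v ≠ x → σ v ≠ σ x := by
    intro v hv hcon
    exact hprop x v (hhub v hv) hcon.symm
  -- there is a vertex other than x
  have hy : ∃ y : V, y ≠ x := by
    have := Sym2.other_ne (hFd e he) hxe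
    exact ⟨Sym2.Mem.other hxe, this⟩
  have hne : ((Set.univ : Set V) \ {x}).Nonempty := by
    obtain ⟨y, hy⟩ := hy
    exact ⟨y, Set.mem_univ y, hy⟩
  set H := SimpleGraph.fromEdgeSet (symmDiff G.edgeSet F) with hHdef
  set H₀ := SimpleGraph.fromEdgeSet (symmDiff G.edgeSet F₀) with hH₀def
  -- H and H₀ agree away from x
  have hagree : ∀ u ∈ (Set.univ : Set V) \ {x}, ∀ v ∈ (Set.univ : Set V) \ {x},
      (H.Adj u v ↔ H₀.Adj u v) := by
    intro u hu v hv
    have hxuv : x ∉ s(u, v) := by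
      rw [Sym2.mem_iff]
      rintro (rfl | rfl)
      · exact hu.2 rfl
      · exact hv.2 rfl
    have hFF : s(u, v) ∈ F ↔ s(u, v) ∈ F₀ := by
      constructor
      · intro h; exact ⟨h, hxuv⟩
      · intro h; exact h.1
    simp only [hHdef, hH₀def, SimpleGraph.fromEdgeSet_adj, Set.mem_symmDiff]
    rw [hFF]
  -- H₀ has x as a hub
  have hhub₀ : ∀ v : V, v ≠ x → H₀.Adj x v := by
    intro v hv
    have hxv : x ∈ s(x, v) := Sym2.mem_mk_left x v
    have : s(x, v) ∉ F₀ := fun h => h.2 hxv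
    rw [hH₀def, SimpleGraph.fromEdgeSet_adj]
    refine ⟨?_, fun h => hv h.symm⟩
    rw [Set.mem_symmDiff]
    exact Or.inl ⟨G.mem_edgeSet.mpr (hhub v hv), this⟩
  -- deletion and transfer
  have hdel : HCOn H σ ((Set.univ : Set V) \ {x}) :=
    HCOn_delete hF (fun v _ => hxcol v) hne
  have hdel₀ : HCOn H₀ σ ((Set.univ : Set V) \ {x}) := HCOn_congr hdel hagree
  -- re-join x
  have hjoin : HCOn H₀ σ (({x} : Set V) ∪ ((Set.univ : Set V) \ {x})) := by
    refine HCOn.join _ _ ⟨x, rfl⟩ hne ?_ ?_ ?_ (HCOn.single x) hdel₀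
    · rw [Set.disjoint_left]
      rintro a rfl ha
      exact ha.2 rfl
    · rintro a rfl b hb
      exact hhub₀ b hb.2
    · rw [Set.disjoint_left]
      rintro c ⟨a, rfl, rfl⟩ ⟨b, hb, hba⟩
      exact hxcol b hb.2 hba
  have huniv : (({x} : Set V) ∪ ((Set.univ : Set V) \ {x})) = Set.univ := by
    ext z
    simp only [Set.mem_union, Set.mem_singleton_iff, Set.mem_diff, Set.mem_univ, true_and,
      iff_true]
    by_cases hz : z = x
    · exact Or.inl hz
    · exact Or.inr hz
  rw [huniv] at hjoin
  have := hmin F₀ (fun f hf => hFd f hf.1) hjoin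
  omega

end RBMGPaper
end

section
/- Let $(H,\sigma)$ be a vertex-colored graph whose vertex set consists of $n$ vertices $v_1,\dots,v_n$ that are pairwise adjacent and carry $n$ pairwise distinct colors, together with finitely many additional isolated vertices, each colored with one of the colors $\sigma(v_1),\dots,\sigma(v_n)$. Then $(H,\sigma)$ is an hc-cograph. -/
namespace RBMGPaper

variable {V : Type*} {C : Type*}

/-- Let `(H, σ)` consist of a nonempty set `K` of pairwise adjacent vertices
carrying pairwise distinct colors, together with finitely many further isolated vertices, each
colored with a color already occurring on `K`.  Then `(H, σ)` is an hc-cograph. -/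
theorem clique_plus_isolated_isHCCograph [Fintype V] (H : SimpleGraph V) (σ : V → C)
    (K : Set V) (hKne : K.Nonempty)
    (hadj : ∀ u ∈ K, ∀ v ∈ K, u ≠ v → H.Adj u v)
    (hinj : Set.InjOn σ K)
    (hiso : ∀ v ∉ K, ∀ u : V, ¬ H.Adj v u)
    (hcol : ∀ v : V, σ v ∈ σ '' K) :
    IsHCCograph H σ := by
  classical
  have clique : ∀ (s : Finset V), s.Nonempty → (↑s : Set V) ⊆ K → HCOn H σ ↑s := by
    intro s hs
    induction hs using Finset.Nonempty.cons_induction with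
    | singleton a => intro _; simpa using HCOn.single (G := H) (σ := σ) a
    | cons a s ha hs ih =>
      intro hsub
      rw [Finset.cons_eq_insert, Finset.coe_insert] at hsub ⊢
      have haK : a ∈ K := hsub (Set.mem_insert a ↑s)
      have hsK : (↑s : Set V) ⊆ K := fun x hx => hsub (Set.mem_insert_of_mem _ hx)
      have hnot : a ∉ (↑s : Set V) := by exact_mod_cast ha
      rw [Set.insert_eq]
      refine HCOn.join {a} ↑s ⟨a, rfl⟩ (by exact_mod_cast hs) ?_ ?_ ?_
        (HCOn.single a) (ih hsK)
      · simpa using hnot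
      · intro x hx v hv
        rw [Set.mem_singleton_iff] at hx
        subst hx
        exact hadj x haK v (hsK hv) (fun h => hnot (h ▸ hv))
      · rw [Set.disjoint_left]
        rintro c ⟨x, hx, rfl⟩ ⟨y, hy, hcy⟩
        rw [Set.mem_singleton_iff] at hx
        subst hx
        exact hnot (hinj haK (hsK hy) hcy.symm ▸ hy)
  have step : ∀ (t : Finset V), (∀ v ∈ t, v ∉ K) → HCOn H σ (K ∪ ↑t) := by
    intro t
    induction t using Finset.induction with
    | empty =>
      intro _
      have := clique K.toFinite.toFinset
        (by rwa [Set.Finite.toFinset_nonempty]) (by rw [Set.Finite.coe_toFinset])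
      rw [Set.Finite.coe_toFinset] at this
      simpa using this
    | @insert a t ha ih =>
      intro hout
      have h1 : HCOn H σ (K ∪ ↑t) := ih (fun v hv => hout v (Finset.mem_insert_of_mem hv))
      have haK : a ∉ K := hout a (Finset.mem_insert_self a t)
      have hat : a ∉ (↑t : Set V) := by exact_mod_cast ha
      have : K ∪ ↑(insert a t) = (K ∪ ↑t) ∪ {a} := by
        rw [Finset.coe_insert, Set.insert_eq]
        rw [Set.union_comm {a} ↑t, ← Set.union_assoc]
      rw [this]
      refine HCOn.union (K ∪ ↑t) {a} (hKne.mono Set.subset_union_left) ⟨a, rfl⟩ ?_ ?_ ?_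
        h1 (HCOn.single a)
      · rw [Set.disjoint_right]
        rintro x hx
        rw [Set.mem_singleton_iff] at hx
        subst hx
        simp [haK, hat]
      · intro x hx b hb
        rw [Set.mem_singleton_iff] at hb
        subst hb
        exact fun h => hiso b haK x h.symm
      · refine Or.inr ?_
        rintro c ⟨x, hx, rfl⟩
        rw [Set.mem_singleton_iff] at hx
        subst hx
        exact Set.image_mono Set.subset_union_left (hcol x)
  have : HCOn H σ (K ∪ ↑(Kᶜ : Set V).toFinite.toFinset) := by
    refine step _ (fun v hv => ?_)
    rw [Set.Finite.mem_toFinset] at hv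
    exact hv
  unfold IsHCCograph
  have heq : (Set.univ : Set V) = K ∪ ↑(Kᶜ : Set V).toFinite.toFinset := by
    rw [Set.Finite.coe_toFinset, Set.union_compl_self]
  rw [heq]
  exact this

end RBMGPaper
end
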